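/- For any σ ∈ S_n, τ ∈ S_m with m < n, one has (n - m)·X^τ(σ) = Σ_{τ' ∈ S_{m+1}} X^τ(τ')·X^{τ'}(σ), where X^τ(σ) counts occurrences of the pattern τ in σ. -/

import Mathlib

/-- `patCount τ σ` = number of occurrences of the pattern `τ` in `σ`, i.e. the number of
strictly increasing `f : Fin m → Fin n` (whose image plays the role of the set `A`) such
that `σ` restricted to the image of `f` is order-isomorphic to `τ`. -/
def patCount {m n : ℕ} (τ : Equiv.Perm (Fin m)) (σ : Equiv.Perm (Fin n)) : ℕ :=
  ((Finset.univ : Finset (Fin m → Fin n)).filter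
    (fun f => (∀ i j, i < j → f i < f j) ∧ ∀ i j, τ i < τ j ↔ σ (f i) < σ (f j))).card

/-- pattern of an injective tuple -/
noncomputable def patt {k n : ℕ} (y : Fin k → Fin n) : Equiv.Perm (Fin k) :=
  (Tuple.sort y)⁻¹

lemma patt_lt {k n : ℕ} {y : Fin k → Fin n} (hy : Function.Injective y) (i j : Fin k) :
    patt y i < patt y j ↔ y i < y j := by
  set s := Tuple.sort y with hs
  have hm : StrictMono (y ∘ s) :=
    (Tuple.monotone_sort y).strictMono_of_injective (hy.comp s.injective)
  have : y i = (y ∘ s) (s⁻¹ i) := by simp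
  rw [this, show y j = (y ∘ s) (s⁻¹ j) by simp, hm.lt_iff_lt]
  rfl

lemma perm_eq_of_lt_iff {k : ℕ} {p q : Equiv.Perm (Fin k)}
    (h : ∀ i j, p i < p j ↔ q i < q j) : p = q := by
  have hr : StrictMono (fun i => q (p⁻¹ i)) := by
    intro i j hij
    have := h (p⁻¹ i) (p⁻¹ j)
    simp only [Equiv.Perm.inv_def, Equiv.apply_symm_apply] at this
    exact this.mp hij
  have hrange : Set.range (fun i => q (p⁻¹ i)) = Set.range (id : Fin k → Fin k) := by
    have : Function.Surjective (fun i => q (p⁻¹ i)) := q.surjective.comp p⁻¹.surjective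
    rw [Set.range_eq_univ.mpr this, Set.range_id]
  have hfg : (fun i => q (p⁻¹ i)) = (id : Fin k → Fin k) := (hr.range_inj strictMono_id).mp hrange
  ext i
  have := congrFun hfg (p i)
  simp only [Equiv.Perm.inv_def, Equiv.symm_apply_apply, id_eq] at this
  exact congrArg Fin.val this.symm

open Finset

/-- the "missing index" of a map `Fin m → Fin (m+1)` -/
def kOf {m : ℕ} (h : Fin m → Fin (m + 1)) : Fin (m + 1) :=
  if H : (univ \ image h univ).Nonempty then (univ \ image h univ).min' H else 0

lemma kOf_not_mem {m : ℕ} {h : Fin m → Fin (m + 1)} (hh : Function.Injective h) :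
    kOf h ∉ image h univ := by
  have hcard : (image h univ).card = m := by
    rw [Finset.card_image_of_injective _ hh, card_univ, Fintype.card_fin]
  have H : (univ \ image h univ).Nonempty := by
    rw [← Finset.card_pos, Finset.card_sdiff_of_subset (subset_univ _), card_univ, Fintype.card_fin, hcard]
    omega
  have : kOf h ∈ univ \ image h univ := by
    rw [kOf, dif_pos H]; exact Finset.min'_mem _ H
  exact (Finset.mem_sdiff.mp this).2

/-- forward map of the double counting bijection -/
noncomputable def phi {m n : ℕ} (σ : Equiv.Perm (Fin n)) (p : (_ : Fin m → Fin n) × Fin n) :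
    (_ : Equiv.Perm (Fin (m + 1))) × ((Fin m → Fin (m + 1)) × (Fin (m + 1) → Fin n)) :=
  if hB : (insert p.2 (image p.1 univ)).card = m + 1 then
    let B := insert p.2 (image p.1 univ)
    let g : Fin (m + 1) → Fin n := B.orderEmbOfFin hB
    ⟨patt (σ ∘ g),
      (fun i => (B.orderIsoOfFin hB).symm
        ⟨p.1 i, mem_insert_of_mem (mem_image_of_mem _ (mem_univ i))⟩, g)⟩
  else ⟨1, (Fin.castSucc, fun _ => p.2)⟩

/-- backward map -/
def psi {m n : ℕ}
    (q : (_ : Equiv.Perm (Fin (m + 1))) × ((Fin m → Fin (m + 1)) × (Fin (m + 1) → Fin n))) :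
    (_ : Fin m → Fin n) × Fin n :=
  ⟨q.2.2 ∘ q.2.1, q.2.2 (kOf q.2.1)⟩

lemma hB_of {m n : ℕ} {f : Fin m → Fin n} {x : Fin n} (hf : Function.Injective f)
    (hx : x ∉ image f univ) : (insert x (image f univ)).card = m + 1 := by
  rw [Finset.card_insert_of_notMem hx, Finset.card_image_of_injective _ hf, card_univ,
    Fintype.card_fin]

lemma phi_spec {m n : ℕ} (σ : Equiv.Perm (Fin n)) {f : Fin m → Fin n} {x : Fin n}
    (hf : StrictMono f) (hx : x ∉ image f univ) :
    ∃ (τ' : Equiv.Perm (Fin (m + 1))) (h : Fin m → Fin (m + 1)) (g : Fin (m + 1) → Fin n),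
      phi σ ⟨f, x⟩ = ⟨τ', (h, g)⟩ ∧ StrictMono h ∧ StrictMono g ∧
      (∀ i, g (h i) = f i) ∧ (∀ i j, τ' i < τ' j ↔ σ (g i) < σ (g j)) ∧
      g (kOf h) = x ∧ Set.range g = ↑(insert x (image f univ)) := by
  have hB : (insert x (image f univ)).card = m + 1 := hB_of hf.injective hx
  set B := insert x (image f univ) with hBdef
  set g : Fin (m + 1) → Fin n := ⇑(B.orderEmbOfFin hB) with hgdef
  set h : Fin m → Fin (m + 1) := fun i => (B.orderIsoOfFin hB).symm
      ⟨f i, mem_insert_of_mem (mem_image_of_mem _ (mem_univ i))⟩ with hhdef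
  have hg : StrictMono g := (B.orderEmbOfFin hB).strictMono
  have hgh : ∀ i, g (h i) = f i := by
    intro i
    have : (B.orderIsoOfFin hB) (h i)
        = ⟨f i, mem_insert_of_mem (mem_image_of_mem _ (mem_univ i))⟩ :=
      (B.orderIsoOfFin hB).apply_symm_apply _
    rw [hgdef, ← Finset.coe_orderIsoOfFin_apply, this]
  have hh : StrictMono h := by
    intro i j hij
    rw [hhdef]
    exact ((B.orderIsoOfFin hB).symm.lt_iff_lt).mpr (Subtype.mk_lt_mk.mpr (hf hij))
  have hinj : Function.Injective (σ ∘ g) := σ.injective.comp hg.injective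
  refine ⟨patt (σ ∘ g), h, g, ?_, hh, hg, hgh, fun i j => patt_lt hinj i j, ?_,
    Finset.range_orderEmbOfFin B hB⟩
  · rw [phi, dif_pos hB]
  · -- g (kOf h) = x
    have hk : kOf h ∉ image h univ := kOf_not_mem hh.injective
    have hgk : g (kOf h) ∈ B := by
      have : g (kOf h) ∈ Set.range g := Set.mem_range_self _
      rw [hgdef, Finset.range_orderEmbOfFin] at this
      exact this
    have hgknot : g (kOf h) ∉ image f univ := by
      intro hmem
      obtain ⟨i, -, hi⟩ := Finset.mem_image.mp hmem
      have : g (kOf h) = g (h i) := by rw [hgh, hi]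
      exact hk (Finset.mem_image.mpr ⟨i, mem_univ i, (hg.injective this).symm⟩)
    rcases Finset.mem_insert.mp hgk with h1 | h2
    · exact h1
    · exact absurd h2 hgknot

lemma psi_not_mem {m n : ℕ} {h : Fin m → Fin (m + 1)} {g : Fin (m + 1) → Fin n}
    (hh : Function.Injective h) (hg : Function.Injective g) :
    g (kOf h) ∉ image (g ∘ h) univ := by
  intro hmem
  obtain ⟨i, -, hi⟩ := Finset.mem_image.mp hmem
  exact kOf_not_mem hh (Finset.mem_image.mpr ⟨i, mem_univ i, hg hi⟩)

lemma image_insert_eq_univ {m : ℕ} {h : Fin m → Fin (m + 1)} (hh : Function.Injective h) :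
    insert (kOf h) (image h univ) = univ := by
  apply Finset.eq_univ_of_card
  simp [Finset.card_insert_of_notMem (kOf_not_mem hh),
    Finset.card_image_of_injective _ hh]

lemma phi_psi {m n : ℕ} (σ : Equiv.Perm (Fin n)) {τ' : Equiv.Perm (Fin (m + 1))}
    {h : Fin m → Fin (m + 1)} {g : Fin (m + 1) → Fin n}
    (hh : StrictMono h) (hg : StrictMono g)
    (hg2 : ∀ i j, τ' i < τ' j ↔ σ (g i) < σ (g j)) :
    phi σ (psi ⟨τ', (h, g)⟩) = ⟨τ', (h, g)⟩ := by
  have hf : StrictMono (g ∘ h) := hg.comp hh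
  have hx : g (kOf h) ∉ image (g ∘ h) univ := psi_not_mem hh.injective hg.injective
  obtain ⟨τ'', h', g', heq, hh', hg', hgh', hpat', hkx, hrange'⟩ := phi_spec σ hf hx
  have hpsi : psi ⟨τ', (h, g)⟩ = ⟨g ∘ h, g (kOf h)⟩ := rfl
  rw [hpsi, heq]
  -- first show g' = g
  have hBg : insert (g (kOf h)) (image (g ∘ h) univ) = image g univ := by
    rw [← Finset.image_image, ← Finset.image_insert, image_insert_eq_univ hh.injective]
  have hgg : g' = g := by
    have hrange : Set.range g' = Set.range g := by
      rw [hrange', hBg, Finset.coe_image, Finset.coe_univ, Set.image_univ]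
    exact (hg'.range_inj hg).mp hrange
  have hhh : h' = h := by
    funext i
    have hi := hgh' i
    rw [hgg] at hi
    exact hg.injective hi
  have hττ : τ'' = τ' := by
    apply perm_eq_of_lt_iff
    intro i j
    rw [hpat' i j, hgg, ← hg2]
  rw [hgg, hhh, hττ]

theorem pattern_count_recursion {m n : ℕ} (hmn : m < n)
    (σ : Equiv.Perm (Fin n)) (τ : Equiv.Perm (Fin m)) :
    (n - m) * patCount τ σ
      = ∑ τ' : Equiv.Perm (Fin (m + 1)), patCount τ τ' * patCount τ' σ := by
  set F : Finset (Fin m → Fin n) := univ.filter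
    (fun f => (∀ i j, i < j → f i < f j) ∧ ∀ i j, τ i < τ j ↔ σ (f i) < σ (f j)) with hF
  set S : Finset ((_ : Fin m → Fin n) × Fin n) :=
    F.sigma (fun f => univ \ image f univ) with hSdef
  set T : Finset ((_ : Equiv.Perm (Fin (m + 1))) ×
      ((Fin m → Fin (m + 1)) × (Fin (m + 1) → Fin n))) :=
    univ.sigma (fun τ' =>
      (univ.filter (fun h => (∀ i j, i < j → h i < h j) ∧
        ∀ i j, τ i < τ j ↔ τ' (h i) < τ' (h j))) ×ˢ
      (univ.filter (fun g => (∀ i j, i < j → g i < g j) ∧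
        ∀ i j, τ' i < τ' j ↔ σ (g i) < σ (g j)))) with hTdef
  have hST : S.card = T.card := by
    refine Finset.card_nbij' (phi σ) psi ?_ ?_ ?_ ?_
    · rintro ⟨f, x⟩ hp
      rw [hSdef, Finset.mem_coe, Finset.mem_sigma] at hp
      obtain ⟨hfF, hx⟩ := hp
      rw [hF, Finset.mem_filter] at hfF
      obtain ⟨-, hf1, hf2⟩ := hfF
      have hf : StrictMono f := fun i j hij => hf1 i j hij
      have hxim : x ∉ image f univ := (Finset.mem_sdiff.mp hx).2
      obtain ⟨τ', h, g, heq, hh, hg, hgh, hpat, -, -⟩ := phi_spec σ hf hxim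
      rw [heq, hTdef, Finset.mem_coe, Finset.mem_sigma, Finset.mem_product]
      refine ⟨mem_univ _, Finset.mem_filter.mpr ⟨mem_univ _, fun i j hij => hh hij, ?_⟩,
        Finset.mem_filter.mpr ⟨mem_univ _, fun i j hij => hg hij, hpat⟩⟩
      intro i j
      rw [hpat (h i) (h j), hgh i, hgh j]
      exact hf2 i j
    · rintro ⟨τ', h, g⟩ hq
      rw [hTdef, Finset.mem_coe, Finset.mem_sigma, Finset.mem_product, Finset.mem_filter,
        Finset.mem_filter] at hq
      obtain ⟨-, ⟨-, hh1, hh2⟩, ⟨-, hg1, hg2⟩⟩ := hq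
      have hh : StrictMono h := fun i j hij => hh1 i j hij
      have hg : StrictMono g := fun i j hij => hg1 i j hij
      rw [hSdef, Finset.mem_coe, Finset.mem_sigma]
      constructor
      · rw [hF, Finset.mem_filter]
        refine ⟨mem_univ _, fun i j hij => hg (hh hij), ?_⟩
        intro i j
        rw [hh2 i j, hg2 (h i) (h j)]
        rfl
      · rw [Finset.mem_sdiff]
        exact ⟨mem_univ _, psi_not_mem hh.injective hg.injective⟩
    · rintro ⟨f, x⟩ hp
      rw [hSdef, Finset.mem_coe, Finset.mem_sigma] at hp
      obtain ⟨hfF, hx⟩ := hp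
      rw [hF, Finset.mem_filter] at hfF
      obtain ⟨-, hf1, hf2⟩ := hfF
      have hf : StrictMono f := fun i j hij => hf1 i j hij
      have hxim : x ∉ image f univ := (Finset.mem_sdiff.mp hx).2
      obtain ⟨τ', h, g, heq, hh, hg, hgh, hpat, hkx, -⟩ := phi_spec σ hf hxim
      have h1 : g ∘ h = f := funext hgh
      rw [heq]
      show (⟨g ∘ h, g (kOf h)⟩ : (_ : Fin m → Fin n) × Fin n) = ⟨f, x⟩
      rw [h1, hkx]
    · rintro ⟨τ', h, g⟩ hq
      rw [hTdef, Finset.mem_coe, Finset.mem_sigma, Finset.mem_product, Finset.mem_filter,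
        Finset.mem_filter] at hq
      obtain ⟨-, ⟨-, hh1, hh2⟩, ⟨-, hg1, hg2⟩⟩ := hq
      exact phi_psi σ (fun i j hij => hh1 i j hij) (fun i j hij => hg1 i j hij) hg2
  have hS : S.card = (n - m) * patCount τ σ := by
    rw [hSdef, Finset.card_sigma]
    have : ∀ f ∈ F, (univ \ image f univ).card = n - m := by
      intro f hf
      rw [hF, Finset.mem_filter] at hf
      have hsm : StrictMono f := fun i j hij => hf.2.1 i j hij
      have hinj : Function.Injective f := hsm.injective
      rw [Finset.card_sdiff_of_subset (subset_univ _), card_univ, Fintype.card_fin,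
        Finset.card_image_of_injective _ hinj, card_univ, Fintype.card_fin]
    rw [Finset.sum_congr rfl this, Finset.sum_const, smul_eq_mul, mul_comm]
    rfl
  have hT : T.card = ∑ τ' : Equiv.Perm (Fin (m + 1)), patCount τ τ' * patCount τ' σ := by
    rw [hTdef, Finset.card_sigma]
    refine Finset.sum_congr rfl fun τ' _ => ?_
    rw [Finset.card_product]
    rfl
  rw [← hS, hST, hT]
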